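/- For every p ∈ ℝ with p ≠ -n, the weighted L_p affine surface area is homogeneous of degree n(n-p)/(n+p) - k: for every a > 0, ω^p_{m,k,i⃗}(aK) = a^{n(n-p)/(n+p) - k} · ω^p_{m,k,i⃗}(K). -/

import Mathlib

open MeasureTheory Real Filter Set
open scoped RealInnerProductSpace Topology NNReal ENNReal Pointwise

noncomputable section

/-- A convex body of class `C²₊` in `ℝⁿ`: a compact convex set with nonempty
interior, together with its boundary data: the outer unit normal `normal`
and the (everywhere strictly positive) principal curvatures `kappa` of the
boundary. -/
structure C2PlusBody (n : ℕ) where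
  carrier : Set (EuclideanSpace ℝ (Fin n))
  convex' : Convex ℝ carrier
  isCompact' : IsCompact carrier
  interior_nonempty' : (interior carrier).Nonempty
  /-- the outer unit normal at boundary points -/
  normal : EuclideanSpace ℝ (Fin n) → EuclideanSpace ℝ (Fin n)
  normal_norm : ∀ x ∈ frontier carrier, ‖normal x‖ = 1
  normal_outer : ∀ x ∈ frontier carrier, ∀ y ∈ carrier, ⟪y - x, normal x⟫ ≤ 0
  /-- the principal curvatures of the boundary -/
  kappa : Fin (n - 1) → EuclideanSpace ℝ (Fin n) → ℝ
  kappa_pos : ∀ j, ∀ x ∈ frontier carrier, 0 < kappa j x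

namespace C2PlusBody

variable {n : ℕ}

/-- The support `⟨x, N(x)⟩` at a boundary point. -/
def supp (K : C2PlusBody n) (x : EuclideanSpace ℝ (Fin n)) : ℝ := ⟪x, K.normal x⟫

/-- `H j`, the `j`-th normalized elementary symmetric function of the
principal curvatures; `H 0 = 1` and `H (n-1)` is the Gauss curvature. -/
def H (K : C2PlusBody n) (j : ℕ) (x : EuclideanSpace ℝ (Fin n)) : ℝ :=
  ((n - 1).choose j : ℝ)⁻¹ *
    ∑ S ∈ Finset.powersetCard j (Finset.univ : Finset (Fin (n - 1))),
      ∏ l ∈ S, K.kappa l x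

/-- `K` has centroid at the origin. -/
def CentroidZero (K : C2PlusBody n) : Prop :=
  ∫ x in K.carrier, x = (0 : EuclideanSpace ℝ (Fin n))

end C2PlusBody

/-- `c(n) = ∏_{j=1}^{n-1} C(n-1, j)^{i_j}`. -/
def cW (n : ℕ) (i : ℕ → ℕ) : ℝ :=
  ∏ j ∈ Finset.Icc 1 (n - 1), ((n - 1).choose j : ℝ) ^ i j

namespace C2PlusBody

variable {n : ℕ}

/-- The density of the measure `μ_{i⃗} = μ_{m,k,i⃗}` with respect to the surface
measure `ℋ^{n-1}` on `∂K`. -/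
def dens (K : C2PlusBody n) (m : ℕ) (k : ℝ) (i : ℕ → ℕ)
    (x : EuclideanSpace ℝ (Fin n)) : ℝ :=
  cW n i * K.supp x ^ ((m : ℝ) - k) * ∏ j ∈ Finset.Icc 1 (n - 1), K.H j x ^ i j

/-- The weighted `L_p` affine surface area
`ω^p_{m,k,i⃗}(K) = ∫_{∂K} H_{n-1}^{p/(n+p)} ⟨x,N(x)⟩^{-n(p-1)/(n+p)} dμ_{i⃗}`. -/
def omega (K : C2PlusBody n) (m : ℕ) (k : ℝ) (i : ℕ → ℕ) (p : ℝ) : ℝ :=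
  ∫ x in frontier K.carrier,
    K.H (n - 1) x ^ (p / ((n : ℝ) + p)) *
      K.supp x ^ (-((n : ℝ) * (p - 1)) / ((n : ℝ) + p)) *
      K.dens m k i x ∂μH[(n : ℝ) - 1]

end C2PlusBody

/-- `K` is an ellipsoid: an affine image of the Euclidean unit ball. -/
def IsEllipsoid {n : ℕ} (K : Set (EuclideanSpace ℝ (Fin n))) : Prop :=
  ∃ T : EuclideanSpace ℝ (Fin n) ≃ᵃ[ℝ] EuclideanSpace ℝ (Fin n),
    K = T '' Metric.closedBall 0 1

section AuxLemmas

/-- `(a*s)^y = a^y * s^y` when `a > 0`, for arbitrary real `s`. -/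
lemma mul_rpow_of_pos_left {a : ℝ} (ha : 0 < a) (s y : ℝ) :
    (a * s) ^ y = a ^ y * s ^ y := by
  rcases lt_trichotomy s 0 with hs | hs | hs
  · have hprod : a * s < 0 := mul_neg_of_pos_of_neg ha hs
    rw [Real.rpow_def_of_neg hprod, Real.rpow_def_of_neg hs,
      Real.log_mul ha.ne' hs.ne, Real.rpow_def_of_pos ha, add_mul, Real.exp_add]
    ring
  · subst hs
    by_cases hy : y = 0
    · simp [hy]
    · simp [Real.zero_rpow hy]
  · exact Real.mul_rpow ha.le hs.le

/-- `(a^e1 * A) * (a^e2 * B) * (a^e3 * C) = a^(e1+e2+e3) * (A*B*C)` for `a > 0`. -/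
lemma rpow_collect {a : ℝ} (ha : 0 < a) (e1 e2 e3 A B C : ℝ) :
    (a ^ e1 * A) * (a ^ e2 * B) * (a ^ e3 * C)
      = a ^ (e1 + e2 + e3) * (A * B * C) := by
  rw [Real.rpow_add ha, Real.rpow_add ha]; ring

open MeasureTheory in
open scoped Pointwise in
/-- Change of variables for a dilation with respect to Hausdorff measure. -/
lemma setIntegral_hausdorff_smul_set {n : ℕ} {d : ℝ} (hd : 0 ≤ d) {a : ℝ} (ha : 0 < a)
    (S : Set (EuclideanSpace ℝ (Fin n))) (f : EuclideanSpace ℝ (Fin n) → ℝ) :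
    ∫ y in a • S, f y ∂μH[d] = a ^ d * ∫ x in S, f (a • x) ∂μH[d] := by
  have hmem : Measurable fun x : EuclideanSpace ℝ (Fin n) => a • x :=
    (continuous_const_smul a).measurable
  have hsurj : Function.Surjective fun x : EuclideanSpace ℝ (Fin n) => a • x :=
    fun y => ⟨a⁻¹ • y, smul_inv_smul₀ ha.ne' y⟩
  have hmap : (μH[d] : Measure (EuclideanSpace ℝ (Fin n))).restrict (a • S)
      = (‖a‖₊ ^ d : ℝ≥0) • Measure.map (fun x => a • x) (μH[d].restrict S) := by
    ext E hE
    rw [Measure.smul_apply, Measure.map_apply hmem hE,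
      Measure.restrict_apply hE, Measure.restrict_apply (hE.preimage hmem)]
    have hset : a • ((fun x => a • x) ⁻¹' E ∩ S) = E ∩ a • S := by
      rw [Set.smul_set_inter₀ ha.ne', ← Set.image_smul,
        Set.image_preimage_eq _ hsurj]
    calc μH[d] (E ∩ a • S) = μH[d] (a • ((fun x => a • x) ⁻¹' E ∩ S)) := by rw [hset]
      _ = (‖a‖₊ ^ d : ℝ≥0) • μH[d] ((fun x => a • x) ⁻¹' E ∩ S) :=
        Measure.hausdorffMeasure_smul₀ hd ha.ne' _
  have hfun : (fun x : EuclideanSpace ℝ (Fin n) => a • x)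
      = ⇑(Homeomorph.smulOfNeZero a ha.ne') := rfl
  rw [hmap, integral_smul_nnreal_measure, hfun,
    (Homeomorph.smulOfNeZero a ha.ne').measurableEmbedding.integral_map]
  have : ((‖a‖₊ ^ d : ℝ≥0) : ℝ) = a ^ d := by
    rw [NNReal.coe_rpow, coe_nnnorm, Real.norm_eq_abs, abs_of_pos ha]
  rw [NNReal.smul_def, this, smul_eq_mul]
  rfl

end AuxLemmas

/-- For every `p ≠ -n`, the weighted `L_p` affine surface area is
homogeneous of degree `n(n-p)/(n+p) - k`: for every `a > 0`,
`ω^p_{m,k,i⃗}(aK) = a^{n(n-p)/(n+p) - k} ⬝ ω^p_{m,k,i⃗}(K)`.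
Here `aK` denotes the dilate of `K` by `a`, whose boundary data is, as it must be,
`N_{aK}(ax) = N_K(x)` and `κ_j^{aK}(ax) = κ_j^K(x)/a`. -/
theorem weighted_Lp_affine_surface_area_homogeneous
    {n : ℕ} (hn : 2 ≤ n) (m k : ℕ) (i : ℕ → ℕ)
    (hi : ∑ j ∈ Finset.Icc 1 (n - 1), j * i j = m)
    (p : ℝ) (hp : p ≠ -(n : ℝ))
    (K aK : C2PlusBody n) (hc : K.CentroidZero)
    (a : ℝ) (ha : 0 < a)
    (hcar : aK.carrier = a • K.carrier)
    (hdata : ∀ x ∈ frontier K.carrier,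
      aK.normal (a • x) = K.normal x ∧ ∀ j, aK.kappa j (a • x) = K.kappa j x / a) :
    aK.omega m k i p
      = a ^ ((n : ℝ) * ((n : ℝ) - p) / ((n : ℝ) + p) - (k : ℝ)) * K.omega m k i p := by
  have hb : (n : ℝ) + p ≠ 0 := fun h => hp (by linarith)
  have hn1 : ((n - 1 : ℕ) : ℝ) = (n : ℝ) - 1 := by
    have h1 : (1 : ℕ) ≤ n := by omega
    rw [Nat.cast_sub h1, Nat.cast_one]
  set S := frontier K.carrier with hS
  have hSm : MeasurableSet S := isClosed_frontier.measurableSet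
  have hsupp : ∀ x ∈ S, aK.supp (a • x) = a * K.supp x := by
    intro x hx
    unfold C2PlusBody.supp
    rw [(hdata x hx).1, real_inner_smul_left]
  have hH : ∀ (j : ℕ), ∀ x ∈ S, aK.H j (a • x) = K.H j x / a ^ j := by
    intro j x hx
    unfold C2PlusBody.H
    rw [mul_div_assoc, Finset.sum_div]
    congr 1
    refine Finset.sum_congr rfl fun T hT => ?_
    have hcard : T.card = j := (Finset.mem_powersetCard.mp hT).2
    calc ∏ l ∈ T, aK.kappa l (a • x) = ∏ l ∈ T, (K.kappa l x / a) :=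
          Finset.prod_congr rfl fun l _ => (hdata x hx).2 l
      _ = (∏ l ∈ T, K.kappa l x) / a ^ j := by
          rw [Finset.prod_div_distrib, Finset.prod_const, hcard]
  have hdens : ∀ x ∈ S, aK.dens m (k : ℝ) i (a • x)
      = a ^ (-(k : ℝ)) * K.dens m (k : ℝ) i x := by
    intro x hx
    unfold C2PlusBody.dens
    rw [hsupp x hx]
    have hprod : ∏ j ∈ Finset.Icc 1 (n - 1), aK.H j (a • x) ^ i j
        = (∏ j ∈ Finset.Icc 1 (n - 1), K.H j x ^ i j) / a ^ m := by
      calc ∏ j ∈ Finset.Icc 1 (n - 1), aK.H j (a • x) ^ i j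
          = ∏ j ∈ Finset.Icc 1 (n - 1), (K.H j x ^ i j / a ^ (j * i j)) := by
            refine Finset.prod_congr rfl fun j _ => ?_
            rw [hH j x hx, div_pow, ← pow_mul]
        _ = (∏ j ∈ Finset.Icc 1 (n - 1), K.H j x ^ i j) / a ^ m := by
            rw [Finset.prod_div_distrib, Finset.prod_pow_eq_pow_sum, hi]
    rw [hprod, mul_rpow_of_pos_left ha]
    have hak : a ^ ((m : ℝ) - (k : ℝ)) = a ^ (-(k : ℝ)) * a ^ m := by
      rw [← Real.rpow_natCast a m, ← Real.rpow_add ha]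
      congr 1
      ring
    rw [hak]
    have ham : (a : ℝ) ^ m ≠ 0 := pow_ne_zero _ ha.ne'
    field_simp
  have hpt : ∀ x ∈ S,
      aK.H (n - 1) (a • x) ^ (p / ((n : ℝ) + p)) *
          aK.supp (a • x) ^ (-((n : ℝ) * (p - 1)) / ((n : ℝ) + p)) *
          aK.dens m (k : ℝ) i (a • x)
        = a ^ ((-((n : ℝ) - 1)) * (p / ((n : ℝ) + p)) +
              (-((n : ℝ) * (p - 1)) / ((n : ℝ) + p)) + (-(k : ℝ))) *
            (K.H (n - 1) x ^ (p / ((n : ℝ) + p)) *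
              K.supp x ^ (-((n : ℝ) * (p - 1)) / ((n : ℝ) + p)) *
              K.dens m (k : ℝ) i x) := by
    intro x hx
    have e1 : aK.H (n - 1) (a • x) ^ (p / ((n : ℝ) + p))
        = a ^ ((-((n : ℝ) - 1)) * (p / ((n : ℝ) + p))) *
            K.H (n - 1) x ^ (p / ((n : ℝ) + p)) := by
      rw [hH (n - 1) x hx]
      have hdiv : K.H (n - 1) x / a ^ (n - 1) = a ^ (-((n : ℝ) - 1)) * K.H (n - 1) x := by
        rw [Real.rpow_neg ha.le, ← hn1, Real.rpow_natCast, div_eq_inv_mul]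
      rw [hdiv, mul_rpow_of_pos_left (Real.rpow_pos_of_pos ha _), ← Real.rpow_mul ha.le]
    have e2 : aK.supp (a • x) ^ (-((n : ℝ) * (p - 1)) / ((n : ℝ) + p))
        = a ^ (-((n : ℝ) * (p - 1)) / ((n : ℝ) + p)) *
            K.supp x ^ (-((n : ℝ) * (p - 1)) / ((n : ℝ) + p)) := by
      rw [hsupp x hx, mul_rpow_of_pos_left ha]
    rw [e1, e2, hdens x hx, rpow_collect ha]
  have hfr : frontier aK.carrier = a • S := by
    rw [hcar]
    have h1 : a • K.carrier = ⇑(Homeomorph.smulOfNeZero a ha.ne') '' K.carrier := rfl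
    have h2 : a • S = ⇑(Homeomorph.smulOfNeZero a ha.ne') '' S := rfl
    rw [h1, h2, Homeomorph.image_frontier]
  have hd0 : (0 : ℝ) ≤ (n : ℝ) - 1 := by
    have h2 : (2 : ℝ) ≤ (n : ℝ) := by exact_mod_cast hn
    linarith
  unfold C2PlusBody.omega
  rw [hfr, setIntegral_hausdorff_smul_set hd0 ha S _,
    MeasureTheory.setIntegral_congr_fun hSm fun x hx => hpt x hx,
    MeasureTheory.integral_const_mul, ← mul_assoc, ← Real.rpow_add ha]
  congr 2
  field_simp
  ring
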